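/- Let k₁, k₁′ > 0 and M_max, M_max′ > 0, and suppose that for all M in some nonempty open interval contained in (0, min(M_max, M_max′)), k₁·(1 − exp(2.3·(M − M_max))) = k₁′·(1 − exp(2.3·(M − M_max′))). Then k₁ = k₁′ and M_max = M_max′. -/
import Mathlib


theorem vtt_identifiability_k1_Mmax (k1 k1' Mmax Mmax' a b : ℝ)
    (hk1 : 0 < k1) (hk1' : 0 < k1') (hMmax : 0 < Mmax) (hMmax' : 0 < Mmax')
    (hab : a < b) (hsub : Set.Ioo a b ⊆ Set.Ioo 0 (min Mmax Mmax'))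
    (heq : ∀ M ∈ Set.Ioo a b,
      k1 * (1 - Real.exp (2.3 * (M - Mmax))) = k1' * (1 - Real.exp (2.3 * (M - Mmax')))) :
    k1 = k1' ∧ Mmax = Mmax' := by
  set M1 : ℝ := a + (b - a) / 3 with hM1def
  set M2 : ℝ := a + 2 * (b - a) / 3 with hM2def
  have hM1 : M1 ∈ Set.Ioo a b := ⟨by simp [hM1def]; linarith, by simp [hM1def]; linarith⟩
  have hM2 : M2 ∈ Set.Ioo a b := ⟨by simp [hM2def]; linarith, by simp [hM2def]; linarith⟩
  have hlt : M1 < M2 := by simp [hM1def, hM2def]; linarith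
  have h1 := heq M1 hM1
  have h2 := heq M2 hM2
  set A : ℝ := k1 * Real.exp (-(2.3 * Mmax)) with hA
  set B : ℝ := k1' * Real.exp (-(2.3 * Mmax')) with hB
  have split : ∀ M m : ℝ, Real.exp (2.3 * (M - m)) = Real.exp (2.3 * M) * Real.exp (-(2.3 * m)) := by
    intro M m; rw [← Real.exp_add]; ring_nf
  rw [split M1 Mmax, split M1 Mmax'] at h1
  rw [split M2 Mmax, split M2 Mmax'] at h2
  -- h1 : k1 * (1 - exp(2.3 M1) * exp(-2.3 Mmax)) = ...
  have e1 : (A - B) * Real.exp (2.3 * M1) = k1 - k1' := by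
    rw [hA, hB]; nlinarith [h1]
  have e2 : (A - B) * Real.exp (2.3 * M2) = k1 - k1' := by
    rw [hA, hB]; nlinarith [h2]
  have hexp_lt : Real.exp (2.3 * M1) < Real.exp (2.3 * M2) :=
    Real.exp_lt_exp.mpr (by linarith)
  have hAB : A = B := by
    by_contra h
    have h' : A - B ≠ 0 := sub_ne_zero.mpr h
    have : Real.exp (2.3 * M1) = Real.exp (2.3 * M2) := by
      have := e1.trans e2.symm
      exact mul_left_cancel₀ h' this
    linarith
  have hk : k1 = k1' := by
    have := e1
    rw [hAB, sub_self, zero_mul] at this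
    linarith
  refine ⟨hk, ?_⟩
  have hexp_eq : Real.exp (-(2.3 * Mmax)) = Real.exp (-(2.3 * Mmax')) := by
    rw [hA, hB, hk] at hAB
    exact mul_left_cancel₀ (by linarith [hk1']) hAB
  have := Real.exp_injective hexp_eq
  linarith
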